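/- For unit-range valuations the price of anarchy of any fair mechanism is Ω(n). Precisely: let n ≥ 3, m = n, and ε ∈ (0, 1/n²]. Define true unit-range valuations by: agent 1 has value 1 for each of items 1,…,n−1 and value 0 for item n; each agent i ≥ 2 has value 1 for item 1, value ε for each of items 2,…,n−1, and value 0 for item n. Then for every fair mechanism M and every reported profile v (equilibrium or not), the social welfare of the allocation p(v) under these true valuations is at most 3, while OPT = n − 1. Hence the price of anarchy of every fair mechanism under unit-range valuations is at least (n−1)/3. -/

import Mathlib

noncomputable section

/-- `p` is a randomized direct-revelation mechanism: on every reported profile it returns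
nonnegative allocation probabilities, each item being fully allocated. -/
def IsMechanism (n m : ℕ) (p : (Fin n → Fin m → ℝ) → Fin n → Fin m → ℝ) : Prop :=
  ∀ v : Fin n → Fin m → ℝ, (∀ i j, 0 ≤ p v i j) ∧ (∀ j, ∑ i, p v i j = 1)

/-- The mechanism is fair: every agent receives `m/n` items in expectation. -/
def IsFair (n m : ℕ) (p : (Fin n → Fin m → ℝ) → Fin n → Fin m → ℝ) : Prop :=
  ∀ (v : Fin n → Fin m → ℝ) (i : Fin n), ∑ j, p v i j = (m : ℝ) / (n : ℝ)

/-- A unit-range valuation: all values lie in `[0,1]`, with at least one item of value `1`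
and at least one item of value `0`. -/
def IsUnitRange {m : ℕ} (w : Fin m → ℝ) : Prop :=
  (∀ j, w j ∈ Set.Icc (0 : ℝ) 1) ∧ (∃ j, w j = 1) ∧ (∃ j, w j = 0)

/-- **For unit-range valuations the price of anarchy of any fair mechanism is `Ω(n)`.**
With `n ≥ 3` agents, `m = n` items, `ε ∈ (0, 1/n²]`, and the unit-range true valuations
`v'` (agent `0` values items `0,…,n−2` at `1` and item `n−1` at `0`; each agent `i ≥ 1`
values item `0` at `1`, items `1,…,n−2` at `ε`, and item `n−1` at `0`), for every fair
mechanism `p` and every reported profile `v` (equilibrium or not) the social welfare of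
the allocation `p v` under `v'` is at most `3`, while `OPT(v') = n − 1`. -/
theorem unit_range_fair_poa_lower (n : ℕ) (hn : 3 ≤ n)
    (ε : ℝ) (hε0 : 0 < ε) (hε1 : ε ≤ 1 / (n : ℝ) ^ 2)
    (p : (Fin n → Fin n → ℝ) → Fin n → Fin n → ℝ)
    (hmech : IsMechanism n n p) (hfair : IsFair n n p)
    (v' : Fin n → Fin n → ℝ)
    (hv' : ∀ i j, v' i j =
      if (i : ℕ) = 0 then (if (j : ℕ) < n - 1 then 1 else 0)
      else if (j : ℕ) = 0 then 1
      else if (j : ℕ) < n - 1 then ε else 0) :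
    (∀ i, IsUnitRange (v' i)) ∧
    (∀ v : Fin n → Fin n → ℝ, ∑ i, ∑ j, p v i j * v' i j ≤ 3) ∧
    (∑ j, ⨆ i, v' i j) = (n : ℝ) - 1 := by
  have hn0 : (0:ℕ) < n := by omega
  have hnR : (0:ℝ) < n := by exact_mod_cast hn0
  have hn3 : (3:ℝ) ≤ (n:ℝ) := by exact_mod_cast hn
  have hε1' : ε ≤ 1 := le_trans hε1 (by rw [div_le_one (by positivity)]; nlinarith)
  set i0 : Fin n := ⟨0, hn0⟩ with hi0
  have hv0 : ∀ j : Fin n, v' i0 j = if (j:ℕ) < n - 1 then 1 else 0 := by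
    intro j; rw [hv' i0 j]; simp [i0]
  have hvi : ∀ i : Fin n, (i:ℕ) ≠ 0 → ∀ j : Fin n,
      v' i j = if (j:ℕ) = 0 then 1 else if (j:ℕ) < n - 1 then ε else 0 := by
    intro i hi j; rw [hv' i j]; simp [hi]
  have hv'mem : ∀ i j, 0 ≤ v' i j ∧ v' i j ≤ 1 := by
    intro i j; rw [hv' i j]
    split_ifs <;> constructor <;> linarith
  have hrow : ∀ v (i : Fin n), ∑ j, p v i j = 1 := by
    intro v i; rw [hfair v i, div_self (ne_of_gt hnR)]
  refine ⟨?_, ?_, ?_⟩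
  · -- unit range
    intro i
    refine ⟨fun j => ⟨(hv'mem i j).1, (hv'mem i j).2⟩, ⟨i0, ?_⟩, ⟨⟨n-1, by omega⟩, ?_⟩⟩
    · by_cases hi : (i:ℕ) = 0
      · have : i = i0 := Fin.ext hi
        rw [this, hv0]; simp [i0]; omega
      · rw [hvi i hi]; simp [i0]
    · by_cases hi : (i:ℕ) = 0
      · have : i = i0 := Fin.ext hi
        rw [this, hv0]; simp
      · rw [hvi i hi]; simp; omega
  · -- welfare bound
    intro v
    have hp := (hmech v).1
    have key : ∀ i j, p v i j * v' i j ≤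
        (if i = i0 then p v i j else 0) + (if j = i0 then p v i j else 0) + ε * p v i j := by
      intro i j
      have hpij := hp i j
      rcases eq_or_ne i i0 with hi | hi
      · subst hi
        rw [if_pos rfl]
        have h1 := (hv'mem i0 j).2
        have h2 := (hv'mem i0 j).1
        have h3 : (0:ℝ) ≤ if j = i0 then p v i0 j else 0 := by
          split_ifs
          · exact hp i0 j
          · exact le_refl 0
        nlinarith [mul_le_mul_of_nonneg_left h1 hpij, mul_nonneg hε0.le hpij]
      · have hine : (i:ℕ) ≠ 0 := fun h => hi (Fin.ext h)
        rw [if_neg hi, hvi i hine j]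
        rcases eq_or_ne j i0 with hj | hj
        · subst hj
          simp only [if_pos rfl]
          simp only [show ((i0:Fin n):ℕ) = 0 from rfl, if_true]
          norm_num
          nlinarith [mul_nonneg hε0.le hpij]
        · have hjne : (j:ℕ) ≠ 0 := fun h => hj (Fin.ext h)
          rw [if_neg hj, if_neg hjne]
          split_ifs <;> nlinarith [mul_nonneg hε0.le hpij]
    have hA : ∑ i : Fin n, ∑ j, (if i = i0 then p v i j else 0) = 1 := by
      rw [Finset.sum_eq_single i0]
      · simp [hrow v i0]
      · intro b _ hb; simp [hb]
      · simp
    have hB : ∑ i : Fin n, ∑ j, (if j = i0 then p v i j else 0) = 1 := by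
      have h1 : ∀ i : Fin n, ∑ j, (if j = i0 then p v i j else 0) = p v i i0 := by
        intro i
        rw [Finset.sum_eq_single i0]
        · simp
        · intro b _ hb; simp [hb]
        · simp
      simp only [h1]
      exact (hmech v).2 i0
    have hC : ∑ i : Fin n, ∑ j : Fin n, ε * p v i j = ε * n := by
      have : ∀ i : Fin n, ∑ j, ε * p v i j = ε := by
        intro i; rw [← Finset.mul_sum, hrow v i, mul_one]
      simp only [this, Finset.sum_const, Finset.card_univ, Fintype.card_fin, nsmul_eq_mul]
      ring
    have hεn : ε * n ≤ 1 := by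
      have h2 : ε * (n:ℝ) ≤ (1 / (n:ℝ)^2) * n := mul_le_mul_of_nonneg_right hε1 hnR.le
      have h3 : (1 / (n:ℝ)^2) * n = 1 / n := by field_simp
      rw [h3] at h2
      have h4 : (1:ℝ)/n ≤ 1 := by rw [div_le_one hnR]; linarith
      linarith
    calc ∑ i, ∑ j, p v i j * v' i j
        ≤ ∑ i : Fin n, ∑ j : Fin n, ((if i = i0 then p v i j else 0) + (if j = i0 then p v i j else 0) + ε * p v i j) := by
          apply Finset.sum_le_sum; intro i _
          apply Finset.sum_le_sum; intro j _
          exact key i j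
      _ = (∑ i : Fin n, ∑ j, (if i = i0 then p v i j else 0)) + (∑ i : Fin n, ∑ j, (if j = i0 then p v i j else 0)) + ∑ i : Fin n, ∑ j : Fin n, ε * p v i j := by
          rw [← Finset.sum_add_distrib, ← Finset.sum_add_distrib]
          congr 1; ext i
          rw [← Finset.sum_add_distrib, ← Finset.sum_add_distrib]
      _ ≤ 1 + 1 + 1 := by rw [hA, hB, hC]; linarith
      _ = 3 := by norm_num
  · -- OPT
    have hsup : ∀ j : Fin n, (⨆ i, v' i j) = if (j:ℕ) < n - 1 then 1 else 0 := by
      intro j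
      haveI : Nonempty (Fin n) := ⟨i0⟩
      apply le_antisymm
      · apply ciSup_le
        intro i
        split_ifs with h
        · exact (hv'mem i j).2
        · by_cases hi : (i:ℕ) = 0
          · have : i = i0 := Fin.ext hi
            rw [this, hv0, if_neg h]
          · rw [hvi i hi, if_neg (by omega : ¬ (j:ℕ) = 0), if_neg h]
      · have hb : BddAbove (Set.range fun i => v' i j) :=
          Set.Finite.bddAbove (Set.finite_range _)
        have hle := le_ciSup hb i0
        rw [hv0 j] at hle
        split_ifs at hle ⊢ with h
        · exact hle
        · exact hle
    simp only [hsup]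
    rw [Fin.sum_univ_eq_sum_range (fun k => if k < n - 1 then (1:ℝ) else 0) n]
    have h1 : ∀ k ∈ Finset.range n, (if k < n - 1 then (1:ℝ) else 0) = if k ∈ Finset.range (n-1) then (1:ℝ) else 0 := by
      intro k _; simp [Finset.mem_range]
    rw [Finset.sum_congr rfl h1]
    rw [Finset.sum_ite_mem]
    have h2 : Finset.range n ∩ Finset.range (n-1) = Finset.range (n-1) := by
      ext k; simp only [Finset.mem_inter, Finset.mem_range]; omega
    rw [h2]
    simp only [Finset.sum_const, Finset.card_range, nsmul_eq_mul, mul_one]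
    push_cast [Nat.cast_sub (by omega : 1 ≤ n)]
    ring
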